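/- Let $R$ be a left Noetherian ring and $\theta$ a ring automorphism of $R$. Then the Krull dimension (in the sense of Gabriel–Rentschler) of the skew polynomial ring $R[x;\theta]$ equals $\mathcal{K}(R) + 1$. -/

import Mathlib

/-- Gabriel–Rentschler Krull dimension: `ModKrullLE R α M` means `M ∈ 𝒦_α`,
i.e. in every countable descending chain of submodules, all but finitely many factors
are either zero or have Krull dimension `< α`. -/
noncomputable def ModKrullLE (R : Type) [Ring R] : Ordinal.{0} → (M : Type) → [AddCommGroup M] → [Module R M] → Prop :=
  fun α M _ _ =>
  ∀ f : ℕ → Submodule R M, (∀ i, f (i + 1) ≤ f i) →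
    {i : ℕ | f (i + 1) ≠ f i ∧
      ¬ ∃ β : Ordinal.{0}, ∃ _ : β < α,
        ModKrullLE R β (↥(f i) ⧸ Submodule.comap (f i).subtype (f (i + 1)))}.Finite
termination_by α M => α

open scoped Classical in
/-- The Gabriel–Rentschler Krull dimension of a module: `⊥` (i.e. `-1`) for the zero module,
otherwise the least ordinal `α` with `M ∈ 𝒦_α`. -/
noncomputable def modKrullDim (R : Type) [Ring R] (M : Type) [AddCommGroup M] [Module R M] :
    WithBot Ordinal.{0} :=
  if Subsingleton M then ⊥ else ↑(sInf {α : Ordinal | ModKrullLE R α M})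



theorem modKrullLE_iff (R : Type) [Ring R] (α : Ordinal.{0}) (M : Type) [AddCommGroup M]
    [Module R M] : ModKrullLE R α M ↔
    ∀ f : ℕ → Submodule R M, (∀ i, f (i + 1) ≤ f i) →
    {i : ℕ | f (i + 1) ≠ f i ∧
      ¬ ∃ β : Ordinal.{0}, ∃ _ : β < α,
        ModKrullLE R β (↥(f i) ⧸ Submodule.comap (f i).subtype (f (i + 1)))}.Finite := by
  rw [ModKrullLE]

noncomputable def intervalEquiv {R M : Type} [Ring R] [AddCommGroup M] [Module R M]
    (p q : Submodule R M) (h : q ≤ p) :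
    {m : Submodule R ↥p // Submodule.comap p.subtype q ≤ m} ≃ ↥(Set.Icc q p) where
  toFun m := ⟨Submodule.map p.subtype m.1, by
    constructor
    · have h0 : Submodule.map p.subtype (Submodule.comap p.subtype q) = q := by
        rw [Submodule.map_comap_subtype]; exact inf_eq_right.mpr h
      exact le_trans (le_of_eq h0.symm) (Submodule.map_mono m.2)
    · exact Submodule.map_subtype_le p m.1⟩
  invFun s := ⟨Submodule.comap p.subtype s.1, Submodule.comap_mono s.2.1⟩
  left_inv m := by
    apply Subtype.ext
    simp [Submodule.comap_map_eq, Submodule.ker_subtype]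
  right_inv s := by
    apply Subtype.ext
    simp only [Submodule.map_comap_subtype]
    exact inf_eq_right.mpr s.2.2

noncomputable def intervalOrderIso {R M : Type} [Ring R] [AddCommGroup M] [Module R M]
    (p q : Submodule R M) (h : q ≤ p) :
    Submodule R (↥p ⧸ Submodule.comap p.subtype q) ≃o ↥(Set.Icc q p) :=
  (Submodule.comapMkQRelIso (Submodule.comap p.subtype q)).trans
    (Equiv.toOrderIso (intervalEquiv p q h)
      (fun m m' hmm => Subtype.mk_le_mk.mpr (Submodule.map_mono hmm))
      (fun s s' hss => Subtype.mk_le_mk.mpr (Submodule.comap_mono hss)))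

noncomputable def latKrullLE : Ordinal.{0} → (L : Type) → [Lattice L] → Prop :=
  fun α L _ =>
  ∀ f : ℕ → L, (∀ i, f (i + 1) ≤ f i) →
    {i : ℕ | f (i + 1) ≠ f i ∧
      ¬ ∃ β : Ordinal.{0}, ∃ _ : β < α, latKrullLE β (↥(Set.Icc (f (i + 1)) (f i)))}.Finite
termination_by α L => α

theorem latKrullLE_iff (α : Ordinal.{0}) (L : Type) [Lattice L] :
    latKrullLE α L ↔
    ∀ f : ℕ → L, (∀ i, f (i + 1) ≤ f i) →
    {i : ℕ | f (i + 1) ≠ f i ∧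
      ¬ ∃ β : Ordinal.{0}, ∃ _ : β < α, latKrullLE β (↥(Set.Icc (f (i + 1)) (f i)))}.Finite := by
  rw [latKrullLE]

theorem latKrullLE_mono {α β : Ordinal.{0}} (hab : α ≤ β) {L : Type} [Lattice L]
    (h : latKrullLE α L) : latKrullLE β L := by
  rw [latKrullLE_iff] at h ⊢
  intro f hf
  refine (h f hf).subset ?_
  rintro i ⟨h1, h2⟩
  exact ⟨h1, fun ⟨γ, hγ, hg⟩ => h2 ⟨γ, hγ.trans_le hab, hg⟩⟩

theorem latKrullLE_of_subsingleton (α : Ordinal.{0}) (L : Type) [Lattice L] [Subsingleton L] :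
    latKrullLE α L := by
  rw [latKrullLE_iff]
  intro f _
  refine Set.Finite.subset (Set.finite_empty) ?_
  rintro i ⟨h1, -⟩
  exact absurd (Subsingleton.elim _ _) h1

theorem latKrullLE_transfer : ∀ (α : Ordinal.{0}) {L L' : Type} [Lattice L] [Lattice L']
    (g : L' → L), Monotone g → (∀ a b : L', a < b → g a ≠ g b) →
    latKrullLE α L → latKrullLE α L' := by
  intro α
  induction α using Ordinal.induction with
  | _ α IH =>
    intro L L' _ _ g gm gs h
    rw [latKrullLE_iff] at h ⊢
    intro f hf
    refine (h (fun i => g (f i)) (fun i => gm (hf i))).subset ?_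
    rintro i ⟨h1, h2⟩
    have hlt : f (i + 1) < f i := lt_of_le_of_ne (hf i) h1
    refine ⟨gs _ _ hlt, ?_⟩
    rintro ⟨β, hβ, hb⟩
    refine h2 ⟨β, hβ, ?_⟩
    refine IH β hβ (fun p => ⟨g p.1, gm p.2.1, gm p.2.2⟩) ?_ ?_ hb
    · intro p q hpq; exact gm hpq
    · intro p q hpq he
      exact gs p.1 q.1 (Subtype.coe_lt_coe.mpr hpq) (congrArg Subtype.val he)

theorem latKrullLE_transfer_inj {α : Ordinal.{0}} {L L' : Type} [Lattice L] [Lattice L']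
    (g : L' → L) (gm : Monotone g) (gi : Function.Injective g)
    (h : latKrullLE α L) : latKrullLE α L' :=
  latKrullLE_transfer α g gm (fun _ _ hab he => (ne_of_lt hab) (gi he)) h

theorem icc_self_subsingleton {C : Type*} [PartialOrder C] (a : C) :
    Subsingleton ↥(Set.Icc a a) :=
  ⟨fun p q => Subtype.ext ((le_antisymm p.2.2 p.2.1).trans (le_antisymm q.2.2 q.2.1).symm)⟩

theorem latKrullLE_prod : ∀ (α : Ordinal.{0}) {A B : Type} [Lattice A] [Lattice B],
    latKrullLE α A → latKrullLE α B → latKrullLE α (A × B) := by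
  intro α
  induction α using Ordinal.induction with
  | _ α IH =>
    intro A B _ _ hA hB
    rw [latKrullLE_iff] at hA hB ⊢
    intro f hf
    have h1 := hA (fun i => (f i).1) (fun i => (hf i).1)
    have h2 := hB (fun i => (f i).2) (fun i => (hf i).2)
    refine (h1.union h2).subset ?_
    rintro i ⟨hne, hno⟩
    by_contra hcon
    simp only [Set.mem_union, Set.mem_setOf_eq, not_or, not_and_or, not_not] at hcon
    obtain ⟨c1, c2⟩ := hcon
    have hx : ∃ β : Ordinal.{0}, ∃ _ : β < α,
        latKrullLE β ↥(Set.Icc (f (i+1)).1 (f i).1) ∧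
        latKrullLE β ↥(Set.Icc (f (i+1)).2 (f i).2) := by
      rcases c1 with e1 | ⟨β₁, hβ₁, hb1⟩
      · rcases c2 with e2 | ⟨β₂, hβ₂, hb2⟩
        · exact absurd (Prod.ext e1 e2) hne
        · haveI : Subsingleton ↥(Set.Icc (f (i+1)).1 (f i).1) := by
            rw [e1]; exact icc_self_subsingleton _
          exact ⟨β₂, hβ₂, latKrullLE_of_subsingleton _ _, hb2⟩
      · rcases c2 with e2 | ⟨β₂, hβ₂, hb2⟩
        · haveI : Subsingleton ↥(Set.Icc (f (i+1)).2 (f i).2) := by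
            rw [e2]; exact icc_self_subsingleton _
          exact ⟨β₁, hβ₁, hb1, latKrullLE_of_subsingleton _ _⟩
        · exact ⟨max β₁ β₂, max_lt hβ₁ hβ₂,
            latKrullLE_mono (le_max_left _ _) hb1, latKrullLE_mono (le_max_right _ _) hb2⟩
    obtain ⟨β, hβ, hb1, hb2⟩ := hx
    refine hno ⟨β, hβ, ?_⟩
    refine latKrullLE_transfer_inj
      (fun p => ((⟨p.1.1, p.2.1.1, p.2.2.1⟩ : ↥(Set.Icc (f (i+1)).1 (f i).1)),
                 (⟨p.1.2, p.2.1.2, p.2.2.2⟩ : ↥(Set.Icc (f (i+1)).2 (f i).2)))) ?_ ?_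
      (IH β hβ hb1 hb2)
    · intro p q hpq
      exact ⟨hpq.1, hpq.2⟩
    · intro p q hpq
      apply Subtype.ext
      exact Prod.ext (congrArg Subtype.val (congrArg Prod.fst hpq))
        (congrArg Subtype.val (congrArg Prod.snd hpq))

theorem latKrullLE_finpi (n : ℕ) (α : Ordinal.{0}) {L : Type} [Lattice L]
    (h : latKrullLE α L) : latKrullLE α (Fin n → L) := by
  induction n with
  | zero =>
    haveI : Subsingleton (Fin 0 → L) := ⟨fun f g => funext fun i => i.elim0⟩
    exact latKrullLE_of_subsingleton _ _
  | succ n IH =>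
    refine latKrullLE_transfer_inj (fun F => (F 0, F ∘ Fin.succ)) ?_ ?_
      (latKrullLE_prod α h IH)
    · intro F G hFG
      exact ⟨hFG 0, fun i => hFG i.succ⟩
    · intro F G hFG
      funext i
      refine Fin.cases ?_ ?_ i
      · exact congrArg Prod.fst hFG
      · intro j
        exact congrFun (congrArg Prod.snd hFG) j

theorem wellFoundedGT_subtype {L : Type*} [Preorder L] [WellFoundedGT L] (s : Set L) :
    WellFoundedGT s := by
  constructor
  exact InvImage.wf (Subtype.val) (wellFounded_gt)

theorem latKrullLE_exists (L : Type) [CompleteLattice L] [WellFoundedGT L] :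
    ∃ α : Ordinal.{0}, latKrullLE α L := by
  have H : ∀ a : L, ∃ α : Ordinal.{0}, latKrullLE α ↥(Set.Icc a ⊤) := by
    intro a
    refine (wellFounded_gt (α := L)).induction (C := fun a => ∃ α : Ordinal.{0}, latKrullLE α ↥(Set.Icc a ⊤)) a ?_
    clear a
    intro a IH
    classical
      set g : L → Ordinal.{0} := fun b => sInf {α : Ordinal.{0} | latKrullLE α ↥(Set.Icc b ⊤)}
        with hg
      have hgb : ∀ b : L, a < b → latKrullLE (g b) ↥(Set.Icc b ⊤) := by
        intro b hb
        exact csInf_mem (IH b hb)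
      have hbdd : BddAbove (Set.range fun b : {b : L // a < b} => g b.1) :=
        Ordinal.bddAbove_range _
      refine ⟨(⨆ b : {b : L // a < b}, g b.1) + 1, ?_⟩
      rw [latKrullLE_iff]
      intro f hf
      have hanti : ∀ m k : ℕ, m ≤ k → f k ≤ f m := fun m k h =>
        antitone_nat_of_succ_le hf h
      set Bad := {i : ℕ | f (i + 1) ≠ f i ∧
          ¬ ∃ β : Ordinal.{0}, ∃ _ : β < (⨆ b : {b : L // a < b}, g b.1) + 1,
            latKrullLE β ↥(Set.Icc (f (i + 1)) (f i))} with hBad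
      have hval : ∀ k ∈ Bad, (f (k + 1)).1 = a := by
        rintro k ⟨-, hk2⟩
        by_contra hne
        have hlt : a < (f (k + 1)).1 := lt_of_le_of_ne (f (k + 1)).2.1 (Ne.symm hne)
        refine hk2 ⟨g (f (k + 1)).1, ?_, ?_⟩
        · refine lt_of_le_of_lt (le_ciSup hbdd ⟨(f (k + 1)).1, hlt⟩) ?_
          rw [Ordinal.add_one_eq_succ]
          exact Order.lt_succ _
        · refine latKrullLE_transfer_inj
            (fun p => (⟨p.1.1, p.2.1, le_top⟩ : ↥(Set.Icc (f (k + 1)).1 ⊤))) ?_ ?_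
            (hgb _ hlt)
          · intro p q hpq
            exact hpq
          · intro p q hpq
            have h2 := congrArg (fun z : ↥(Set.Icc ((f (k + 1)).1 : L) ⊤) => z.1) hpq
            exact Subtype.ext (Subtype.ext h2)
      have hsub : Bad.Subsingleton := by
        intro i hi j hj
        by_contra hij
        rcases Nat.lt_or_ge i j with hlt | hge
        · have h1 : f j ≤ f (i + 1) := hanti _ _ hlt
          have h2 : (f j).1 = a := le_antisymm ((show ((f j : L) ≤ (f (i+1) : L))  from h1).trans (le_of_eq (hval i hi))) (f j).2.1
          exact hj.1 (Subtype.ext ((hval j hj).trans h2.symm))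
        · have hlt' : j < i := lt_of_le_of_ne hge (Ne.symm hij)
          have h1 : f i ≤ f (j + 1) := hanti _ _ hlt'
          have h2 : (f i).1 = a := le_antisymm ((show ((f i : L) ≤ (f (j+1) : L)) from h1).trans (le_of_eq (hval j hj))) (f i).2.1
          exact hi.1 (Subtype.ext ((hval i hi).trans h2.symm))
      exact hsub.finite
  obtain ⟨α, hα⟩ := H ⊥
  refine ⟨α, latKrullLE_transfer_inj (fun p => (⟨p, bot_le, le_top⟩ : ↥(Set.Icc (⊥ : L) ⊤)))
    ?_ ?_ hα⟩
  · intro p q hpq; exact hpq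
  · intro p q hpq
    have h2 := congrArg (fun z : ↥(Set.Icc (⊥ : L) ⊤) => z.1) hpq
    exact h2

theorem subsingleton_orderHom {S : Type*} [Preorder S] [Subsingleton S] :
    Subsingleton (ℕ →o S) :=
  ⟨fun f g => OrderHom.ext f g (funext fun _ => Subsingleton.elim _ _)⟩

theorem latKrullLE_orderHom : ∀ (δ : Ordinal.{0}) (L : Type) [Lattice L] [WellFoundedGT L],
    latKrullLE δ L → latKrullLE (δ + 1) (ℕ →o L) := by
  intro δ
  induction δ using Ordinal.induction with
  | _ δ IH =>
    intro L _ _ h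
    rw [latKrullLE_iff]
    intro F hF
    have stab : ∀ m : ℕ, ∃ ν : ℕ, ∀ k, ν ≤ k → F m ν = F m k := fun m =>
      wellFoundedGT_iff_monotone_chain_condition.mp inferInstance (F m)
    choose ν hν using stab
    set W : ℕ → L := fun m => F m (ν m) with hW
    have hWd : ∀ m, W (m + 1) ≤ W m := by
      intro m
      calc W (m + 1) = F (m + 1) (max (ν m) (ν (m + 1))) :=
            hν (m + 1) _ (le_max_right _ _)
        _ ≤ F m (max (ν m) (ν (m + 1))) := hF m _
        _ = W m := (hν m _ (le_max_left _ _)).symm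
    refine (((latKrullLE_iff δ L).mp h) W hWd).subset ?_
    rintro i ⟨hi1, hi2⟩
    set n : ℕ := max (ν i) (ν (i + 1)) with hn
    have hlow : ∀ k, n ≤ k → F (i + 1) k = W (i + 1) := fun k hk =>
      (hν (i + 1) k (le_trans (le_max_right _ _) hk)).symm
    have hhigh : ∀ k, n ≤ k → F i k = W i := fun k hk =>
      (hν i k (le_trans (le_max_left _ _) hk)).symm
    have main : latKrullLE δ (ℕ →o ↥(Set.Icc (W (i + 1)) (W i))) → False := by
      intro tail
      apply hi2
      refine ⟨δ, by rw [Ordinal.add_one_eq_succ]; exact Order.lt_succ _, ?_⟩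
      have hprod : latKrullLE δ ((Fin n → L) × (ℕ →o ↥(Set.Icc (W (i + 1)) (W i)))) :=
        latKrullLE_prod δ (latKrullLE_finpi n δ h) tail
      -- the transfer map
      refine latKrullLE_transfer_inj (fun H =>
        ((fun k : Fin n => H.1 (k : ℕ)),
         (⟨fun j => ⟨H.1 (n + j), ?_, ?_⟩, fun j j' hjj =>
            Subtype.mk_le_mk.mpr (H.1.mono (Nat.add_le_add_left hjj n))⟩ : ℕ →o ↥(Set.Icc (W (i + 1)) (W i))))) ?_ ?_ hprod
      · rw [← hlow (n + j) (Nat.le_add_right _ _)]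
        exact H.2.1 (n + j)
      · rw [← hhigh (n + j) (Nat.le_add_right _ _)]
        exact H.2.2 (n + j)
      · intro H H' hHH
        constructor
        · intro k
          exact hHH (k : ℕ)
        · intro j
          exact Subtype.mk_le_mk.mpr (hHH (n + j))
      · intro H H' he
        have hhead := congrArg Prod.fst he
        have htail := congrArg Prod.snd he
        refine Subtype.ext (OrderHom.ext _ _ (funext fun k => ?_))
        rcases Nat.lt_or_ge k n with hk | hk
        · exact congrFun hhead ⟨k, hk⟩
        · have h1 := congrArg (fun t : ℕ →o ↥(Set.Icc (W (i + 1)) (W i)) => (t (k - n)).1) htail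
          have h2 : H.1 (n + (k - n)) = H'.1 (n + (k - n)) := h1
          rw [Nat.add_sub_cancel' hk] at h2
          exact h2
    constructor
    · intro hEq
      apply main
      haveI : Subsingleton ↥(Set.Icc (W (i + 1)) (W i)) := by
        rw [hEq]; exact icc_self_subsingleton _
      haveI := subsingleton_orderHom (S := ↥(Set.Icc (W (i + 1)) (W i)))
      exact latKrullLE_of_subsingleton _ _
    · rintro ⟨β, hβ, hb⟩
      apply main
      haveI : WellFoundedGT ↥(Set.Icc (W (i + 1)) (W i)) := wellFoundedGT_subtype _
      refine latKrullLE_mono ?_ (IH β hβ _ hb)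
      rw [Ordinal.add_one_eq_succ]
      exact Order.succ_le_of_lt hβ

theorem latKrullLE_congr_iso {α : Ordinal.{0}} {L L' : Type} [Lattice L] [Lattice L']
    (e : L ≃o L') (h : latKrullLE α L) : latKrullLE α L' :=
  latKrullLE_transfer_inj e.symm e.symm.monotone e.symm.injective h

theorem modKrullLE_iff_lat : ∀ (α : Ordinal.{0}) (R M : Type) [Ring R] [AddCommGroup M]
    [Module R M], ModKrullLE R α M ↔ latKrullLE α (Submodule R M) := by
  intro α
  induction α using Ordinal.induction with
  | _ α IH =>
    intro R M _ _ _
    rw [modKrullLE_iff, latKrullLE_iff]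
    constructor
    · intro h f hf
      refine (h f hf).subset ?_
      rintro i ⟨h1, h2⟩
      refine ⟨h1, ?_⟩
      rintro ⟨β, hβ, hb⟩
      refine h2 ⟨β, hβ, ?_⟩
      exact latKrullLE_congr_iso (intervalOrderIso (f i) (f (i + 1)) (hf i))
        ((IH β hβ R _).mp hb)
    · intro h f hf
      refine (h f hf).subset ?_
      rintro i ⟨h1, h2⟩
      refine ⟨h1, ?_⟩
      rintro ⟨β, hβ, hb⟩
      exact h2 ⟨β, hβ, (IH β hβ R _).mpr
        (latKrullLE_congr_iso (intervalOrderIso (f i) (f (i + 1)) (hf i)).symm hb)⟩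

section Skew

variable {R T : Type} [Ring R] [Ring T] (θ : R ≃+* R) (ι : R →+* T) (x : T)

/-- iterates of the automorphism -/
def thetaPow (θ : R ≃+* R) : ℕ → R ≃+* R
  | 0 => RingEquiv.refl R
  | n + 1 => (thetaPow θ n).trans θ

theorem thetaPow_succ_apply (n : ℕ) (r : R) : thetaPow θ (n + 1) r = θ (thetaPow θ n r) := rfl

variable (hb : ∀ t : T, ∃! c : ℕ →₀ R, t = c.sum fun n r => ι r * x ^ n)

noncomputable def rep (t : T) : ℕ →₀ R := (hb t).choose

theorem rep_spec (t : T) : t = (rep ι x hb t).sum fun n r => ι r * x ^ n :=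
  (hb t).choose_spec.1

theorem rep_eq {t : T} {c : ℕ →₀ R} (h : t = c.sum fun n r => ι r * x ^ n) :
    rep ι x hb t = c := ((hb t).choose_spec.2 c h).symm

theorem rep_zero : rep ι x hb 0 = 0 :=
  rep_eq ι x hb (by rw [Finsupp.sum_zero_index])

theorem rep_monomial (n : ℕ) (r : R) : rep ι x hb (ι r * x ^ n) = Finsupp.single n r :=
  rep_eq ι x hb (by rw [Finsupp.sum_single_index]; simp)

theorem rep_add (t t' : T) : rep ι x hb (t + t') = rep ι x hb t + rep ι x hb t' := by
  refine rep_eq ι x hb ?_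
  rw [Finsupp.sum_add_index' (fun n => by simp) (fun n r r' => by rw [map_add, add_mul])]
  exact congrArg₂ (· + ·) (rep_spec ι x hb t) (rep_spec ι x hb t')

noncomputable def repHom : T →+ (ℕ →₀ R) where
  toFun := rep ι x hb
  map_zero' := rep_zero ι x hb
  map_add' := rep_add ι x hb

theorem rep_sub (t t' : T) : rep ι x hb (t - t') = rep ι x hb t - rep ι x hb t' :=
  map_sub (repHom ι x hb) t t'

theorem rep_eq_zero_iff (t : T) : rep ι x hb t = 0 ↔ t = 0 := by
  constructor
  · intro h
    have := rep_spec ι x hb t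
    rw [h, Finsupp.sum_zero_index] at this
    exact this
  · rintro rfl; exact rep_zero ι x hb

theorem rep_iotaMul (r : R) (t : T) :
    rep ι x hb (ι r * t) = (rep ι x hb t).mapRange (r * ·) (mul_zero r) := by
  refine rep_eq ι x hb ?_
  rw [Finsupp.sum_mapRange_index (fun n => by simp)]
  conv_lhs => rw [rep_spec ι x hb t, Finsupp.mul_sum]
  exact Finsupp.sum_congr fun n _ => by rw [← mul_assoc, ← map_mul]

theorem rep_xMul (hcomm : ∀ r : R, x * ι r = ι (θ r) * x) (t : T) :
    rep ι x hb (x * t) =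
      Finsupp.embDomain ⟨Nat.succ, Nat.succ_injective⟩
        ((rep ι x hb t).mapRange θ (map_zero θ)) := by
  refine rep_eq ι x hb ?_
  rw [Finsupp.sum_embDomain, Finsupp.sum_mapRange_index (fun n => by simp)]
  conv_lhs => rw [rep_spec ι x hb t, Finsupp.mul_sum]
  refine Finsupp.sum_congr fun n _ => ?_
  show x * (ι _ * x ^ n) = ι (θ _) * x ^ (n + 1)
  rw [← mul_assoc, hcomm, mul_assoc, ← pow_succ']

theorem rep_xPowMul (hcomm : ∀ r : R, x * ι r = ι (θ r) * x) (j : ℕ) (t : T) :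
    (∀ m : ℕ, rep ι x hb (x ^ j * t) (j + m) = thetaPow θ j (rep ι x hb t m)) ∧
    (∀ m : ℕ, m < j → rep ι x hb (x ^ j * t) m = 0) := by
  induction j with
  | zero =>
    refine ⟨fun m => by simp [thetaPow], fun m hm => absurd hm (Nat.not_lt_zero m)⟩
  | succ j IH =>
    have hx : x ^ (j + 1) * t = x * (x ^ j * t) := by rw [pow_succ', mul_assoc]
    constructor
    · intro m
      rw [hx, rep_xMul θ ι x hb hcomm]
      have hjm : j + 1 + m = Nat.succ (j + m) := by omega
      rw [hjm]
      have h1 := Finsupp.embDomain_apply_self (⟨Nat.succ, Nat.succ_injective⟩ : ℕ ↪ ℕ)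
        ((rep ι x hb (x ^ j * t)).mapRange θ (map_zero θ)) (j + m)
      rw [Finsupp.mapRange_apply, (IH).1 m] at h1
      exact h1
    · intro m hm
      rw [hx, rep_xMul θ ι x hb hcomm]
      match m with
      | 0 =>
        rw [Finsupp.embDomain_notin_range]
        simp [Set.range, Nat.succ_ne_zero]
      | Nat.succ k =>
        have h1 := Finsupp.embDomain_apply_self (⟨Nat.succ, Nat.succ_injective⟩ : ℕ ↪ ℕ)
          ((rep ι x hb (x ^ j * t)).mapRange θ (map_zero θ)) k
        rw [Finsupp.mapRange_apply, (IH).2 k (by omega), map_zero] at h1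
        exact h1

theorem rep_finsuppSum {γ : Type*} [Zero γ] (c : ℕ →₀ γ) (g : ℕ → γ → T) :
    rep ι x hb (c.sum g) = c.sum fun n a => rep ι x hb (g n a) :=
  _root_.map_finsuppSum (repHom ι x hb) c g

theorem rep_mul_low (hcomm : ∀ r : R, x * ι r = ι (θ r) * x) (s t : T) (n : ℕ)
    (h : ∀ k, k < n → rep ι x hb t k = 0) :
    (∀ k, k < n → rep ι x hb (s * t) k = 0) ∧
    rep ι x hb (s * t) n = rep ι x hb s 0 * rep ι x hb t n := by
  have hst : s * t = (rep ι x hb s).sum fun j b => ι b * (x ^ j * t) := by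
    conv_lhs => rw [rep_spec ι x hb s, Finsupp.sum_mul]
    exact Finsupp.sum_congr fun j _ => by rw [mul_assoc]
  have hrep : ∀ m : ℕ, rep ι x hb (s * t) m
      = (rep ι x hb s).sum fun j b => b * rep ι x hb (x ^ j * t) m := by
    intro m
    rw [hst, rep_finsuppSum]
    rw [Finsupp.sum_apply]
    refine Finsupp.sum_congr fun j _ => ?_
    rw [rep_iotaMul, Finsupp.mapRange_apply]
  have hterm : ∀ m, m ≤ n → ∀ j b, j ≠ 0 ∨ m < n → b * rep ι x hb (x ^ j * t) m = 0 := by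
    intro m hm j b hj
    rcases Nat.lt_or_ge m j with hmj | hmj
    · rw [(rep_xPowMul θ ι x hb hcomm j t).2 m hmj, mul_zero]
    · obtain ⟨m', rfl⟩ : ∃ m', m = j + m' := ⟨m - j, by omega⟩
      have hm' : m' < n := by
        rcases hj with hj | hj
        · have : j ≥ 1 := Nat.one_le_iff_ne_zero.mpr hj
          omega
        · omega
      rw [(rep_xPowMul θ ι x hb hcomm j t).1 m', h m' hm', map_zero, mul_zero]
  constructor
  · intro k hk
    rw [hrep k]
    exact Finset.sum_eq_zero fun j _ => hterm k (le_of_lt hk) j _ (Or.inr hk)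
  · rw [hrep n]
    rw [Finsupp.sum_eq_single 0 (fun j hj hjne => hterm n le_rfl j _ (Or.inl hjne))
      (fun _ => by rw [zero_mul])]
    rw [show x ^ 0 * t = t by rw [pow_zero, one_mul]]

/-- the submodule of `T` of elements with coefficients below `n` vanishing and
`n`-th coefficient in `J`. -/
noncomputable def MJ (hcomm : ∀ r : R, x * ι r = ι (θ r) * x) (n : ℕ) (J : Submodule R R) :
    Submodule T T where
  carrier := {t | (∀ k, k < n → rep ι x hb t k = 0) ∧ rep ι x hb t n ∈ J}
  add_mem' := by
    rintro s t ⟨hs1, hs2⟩ ⟨ht1, ht2⟩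
    rw [Set.mem_setOf_eq, rep_add]
    exact ⟨fun k hk => by rw [Finsupp.add_apply, hs1 k hk, ht1 k hk, add_zero],
      J.add_mem hs2 ht2⟩
  zero_mem' := by
    rw [Set.mem_setOf_eq, rep_zero]
    exact ⟨fun k _ => rfl, J.zero_mem⟩
  smul_mem' := by
    rintro s t ⟨ht1, ht2⟩
    rw [smul_eq_mul, Set.mem_setOf_eq]
    obtain ⟨hlow, hn⟩ := rep_mul_low θ ι x hb hcomm s t n ht1
    rw [hn]
    exact ⟨hlow, J.smul_mem _ ht2⟩

theorem MJ_le (hcomm : ∀ r : R, x * ι r = ι (θ r) * x) (n : ℕ) {J J' : Submodule R R}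
    (h : J ≤ J') : MJ θ ι x hb hcomm n J ≤ MJ θ ι x hb hcomm n J' :=
  fun _ ht => ⟨ht.1, h ht.2⟩

theorem mem_MJ_monomial (hcomm : ∀ r : R, x * ι r = ι (θ r) * x) (n : ℕ) (J : Submodule R R)
    (r : R) : ι r * x ^ n ∈ MJ θ ι x hb hcomm n J ↔ r ∈ J := by
  constructor
  · rintro ⟨-, h2⟩
    rwa [rep_monomial, Finsupp.single_eq_same] at h2
  · intro hr
    refine ⟨fun k hk => ?_, ?_⟩
    · rw [rep_monomial]
      exact Finsupp.single_eq_of_ne (by omega)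
    · rwa [rep_monomial, Finsupp.single_eq_same]

theorem MJ_strictmono (hcomm : ∀ r : R, x * ι r = ι (θ r) * x) (n : ℕ)
    {J J' : Submodule R R} (h : J < J') :
    MJ θ ι x hb hcomm n J ≠ MJ θ ι x hb hcomm n J' := by
  intro he
  obtain ⟨r, hr', hr⟩ := SetLike.exists_of_lt h
  have h1 : ι r * x ^ n ∈ MJ θ ι x hb hcomm n J' := (mem_MJ_monomial θ ι x hb hcomm n J' r).mpr hr'
  rw [← he, mem_MJ_monomial] at h1
  exact hr h1

theorem MJ_top_succ_le (hcomm : ∀ r : R, x * ι r = ι (θ r) * x) (n : ℕ) (J : Submodule R R) :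
    MJ θ ι x hb hcomm (n + 1) ⊤ ≤ MJ θ ι x hb hcomm n J := by
  rintro t ⟨h1, -⟩
  exact ⟨fun k hk => h1 k (by omega), by rw [h1 n (by omega)]; exact J.zero_mem⟩

/-- leading coefficient ideals, twisted back by powers of θ -/
noncomputable def PhiAt (hcomm : ∀ r : R, x * ι r = ι (θ r) * x) (I : Submodule T T) (n : ℕ) :
    Submodule R R where
  carrier := {c | ∃ g ∈ I, (∀ m, n < m → rep ι x hb g m = 0) ∧
    rep ι x hb g n = thetaPow θ n c}
  add_mem' := by
    rintro c c' ⟨g, hg, hg1, hg2⟩ ⟨g', hg', hg'1, hg'2⟩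
    refine ⟨g + g', I.add_mem hg hg', fun m hm => ?_, ?_⟩
    · rw [rep_add, Finsupp.add_apply, hg1 m hm, hg'1 m hm, add_zero]
    · rw [rep_add, Finsupp.add_apply, hg2, hg'2, map_add]
  zero_mem' := ⟨0, I.zero_mem, fun m _ => by rw [rep_zero]; rfl, by rw [rep_zero, map_zero]; rfl⟩
  smul_mem' := by
    rintro r c ⟨g, hg, hg1, hg2⟩
    refine ⟨ι (thetaPow θ n r) * g, ?_, fun m hm => ?_, ?_⟩
    · have := I.smul_mem (ι (thetaPow θ n r)) hg
      rwa [smul_eq_mul] at this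
    · rw [rep_iotaMul, Finsupp.mapRange_apply, hg1 m hm, mul_zero]
    · rw [rep_iotaMul, Finsupp.mapRange_apply, hg2, ← map_mul]
      rfl

theorem PhiAt_mono_n (hcomm : ∀ r : R, x * ι r = ι (θ r) * x) (I : Submodule T T) (n : ℕ) :
    PhiAt θ ι x hb hcomm I n ≤ PhiAt θ ι x hb hcomm I (n + 1) := by
  rintro c ⟨g, hg, hg1, hg2⟩
  refine ⟨x * g, ?_, fun m hm => ?_, ?_⟩
  · have := I.smul_mem x hg
    rwa [smul_eq_mul] at this
  · rw [rep_xMul θ ι x hb hcomm]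
    match m, hm with
    | Nat.succ k, hm =>
      have h1 := Finsupp.embDomain_apply_self (⟨Nat.succ, Nat.succ_injective⟩ : ℕ ↪ ℕ)
        ((rep ι x hb g).mapRange θ (map_zero θ)) k
      rw [Finsupp.mapRange_apply, hg1 k (by omega), map_zero] at h1
      exact h1
  · rw [rep_xMul θ ι x hb hcomm]
    have h1 := Finsupp.embDomain_apply_self (⟨Nat.succ, Nat.succ_injective⟩ : ℕ ↪ ℕ)
      ((rep ι x hb g).mapRange θ (map_zero θ)) n
    rw [Finsupp.mapRange_apply, hg2] at h1
    exact h1.trans (thetaPow_succ_apply θ n c).symm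

theorem PhiAt_mono_I (hcomm : ∀ r : R, x * ι r = ι (θ r) * x) {I I' : Submodule T T}
    (h : I ≤ I') (n : ℕ) : PhiAt θ ι x hb hcomm I n ≤ PhiAt θ ι x hb hcomm I' n := by
  rintro c ⟨g, hg, hg1, hg2⟩
  exact ⟨g, h hg, hg1, hg2⟩

theorem PhiAt_inj (hcomm : ∀ r : R, x * ι r = ι (θ r) * x) {I I' : Submodule T T}
    (h : I ≤ I') (he : ∀ n, PhiAt θ ι x hb hcomm I n = PhiAt θ ι x hb hcomm I' n) :
    I = I' := by
  refine le_antisymm h ?_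
  have key : ∀ n : ℕ, ∀ g ∈ I', (∀ m, n ≤ m → rep ι x hb g m = 0) → g ∈ I := by
    intro n
    induction n with
    | zero =>
      intro g _ hg0
      have : rep ι x hb g = 0 := Finsupp.ext fun m => hg0 m (Nat.zero_le m)
      rw [(rep_eq_zero_iff ι x hb g).mp this]
      exact I.zero_mem
    | succ n IH =>
      intro g hg hg0
      have hc : (thetaPow θ n).symm (rep ι x hb g n) ∈ PhiAt θ ι x hb hcomm I' n :=
        ⟨g, hg, fun m hm => hg0 m (by omega), by rw [RingEquiv.apply_symm_apply]⟩
      rw [← he n] at hc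
      obtain ⟨g', hg', hg'1, hg'2⟩ := hc
      rw [RingEquiv.apply_symm_apply] at hg'2
      have hsub : g - g' ∈ I' := Submodule.sub_mem I' hg (h hg')
      have hzero : ∀ m, n ≤ m → rep ι x hb (g - g') m = 0 := by
        intro m hm
        rw [rep_sub, Finsupp.sub_apply]
        rcases Nat.eq_or_lt_of_le hm with rfl | hm'
        · rw [hg'2, sub_self]
        · rw [hg0 m hm', hg'1 m hm', sub_self]
      have := IH (g - g') hsub hzero
      have h2 : g = g - g' + g' := by abel
      rw [h2]
      exact I.add_mem this hg'
  intro g hg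
  refine key ((rep ι x hb g).support.sup id + 1) g hg ?_
  intro m hm
  by_contra hne
  have : m ∈ (rep ι x hb g).support := Finsupp.mem_support_iff.mpr hne
  have h3 := Finset.le_sup (f := id) this
  have h4 : id m = m := rfl
  rw [h4] at h3
  omega

end Skew

/-- Let `R` be a left Noetherian ring and `θ` a ring automorphism of `R`. If `T` is the skew
polynomial ring `R[x; θ]` (axiomatized: `T` contains `R` via `ι`, has an element `x` with
`x · r = θ(r) · x`, and is free as a left `R`-module with basis `{xⁿ}`), then the
Gabriel–Rentschler Krull dimension of `T` equals that of `R` plus one. -/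
theorem krullDim_skew_polynomial (R T : Type) [Ring R] [Ring T] [IsNoetherianRing R]
    (θ : R ≃+* R) (ι : R →+* T) (x : T)
    (hcomm : ∀ r : R, x * ι r = ι (θ r) * x)
    (hbasis : ∀ t : T, ∃! c : ℕ →₀ R, t = c.sum fun n r => ι r * x ^ n) :
    (∃ α : Ordinal, ModKrullLE T α T) ∧ modKrullDim T T = modKrullDim R R + 1 := by
  classical
  by_cases hR : Subsingleton R
  · haveI : Subsingleton (ℕ →₀ R) := ⟨fun c c' => Finsupp.ext fun n => Subsingleton.elim _ _⟩
    haveI hTsub : Subsingleton T := ⟨fun a b => by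
      rw [rep_spec ι x hbasis a, rep_spec ι x hbasis b,
        Subsingleton.elim (rep ι x hbasis a) (rep ι x hbasis b)]⟩
    haveI : Subsingleton (Submodule T T) := ⟨fun p q => by
      ext t
      rw [Subsingleton.elim t 0]
      simp⟩
    constructor
    · exact ⟨0, (modKrullLE_iff_lat 0 T T).mpr (latKrullLE_of_subsingleton 0 _)⟩
    · rw [modKrullDim, if_pos hTsub, modKrullDim, if_pos hR, WithBot.bot_add]
  · haveI hRnt : Nontrivial R := not_subsingleton_iff_nontrivial.mp hR
    have h10 : (1 : T) ≠ 0 := by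
      intro h01
      have hm := rep_monomial ι x hbasis 0 (1 : R)
      rw [map_one, pow_zero, mul_one, h01, rep_zero] at hm
      exact one_ne_zero (by rw [← Finsupp.single_eq_same (a := 0) (b := (1 : R)), ← hm,
        Finsupp.zero_apply])
    haveI hTnt : Nontrivial T := nontrivial_of_ne 1 0 h10
    set δ : Ordinal.{0} := sInf {α : Ordinal | ModKrullLE R α R} with hδ
    have hRex : {α : Ordinal.{0} | ModKrullLE R α R}.Nonempty := by
      obtain ⟨α, hα⟩ := latKrullLE_exists (Submodule R R)
      exact ⟨α, (modKrullLE_iff_lat α R R).mpr hα⟩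
    have hδmem : ModKrullLE R δ R := csInf_mem hRex
    have hlatR : latKrullLE δ (Submodule R R) := (modKrullLE_iff_lat δ R R).mp hδmem
    -- upper bound: T satisfies ModKrullLE (δ + 1)
    have hT : ModKrullLE T (δ + 1) T := by
      rw [modKrullLE_iff_lat]
      have hRG : latKrullLE (δ + 1) (ℕ →o Submodule R R) := latKrullLE_orderHom δ _ hlatR
      refine latKrullLE_transfer (δ + 1) (fun I : Submodule T T =>
        (⟨fun n => PhiAt θ ι x hbasis hcomm I n,
          monotone_nat_of_le_succ (PhiAt_mono_n θ ι x hbasis hcomm I)⟩ : ℕ →o Submodule R R))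
        ?_ ?_ hRG
      · intro I I' hII'
        intro n
        exact PhiAt_mono_I θ ι x hbasis hcomm hII' n
      · intro I I' hlt heq
        refine (ne_of_lt hlt) (PhiAt_inj θ ι x hbasis hcomm (le_of_lt hlt) ?_)
        intro n
        exact DFunLike.congr_fun heq n
    -- lower bound
    have hge : ∀ γ : Ordinal.{0}, ModKrullLE T γ T → δ + 1 ≤ γ := by
      intro γ hγ
      have hlat := (modKrullLE_iff_lat γ T T).mp hγ
      rw [latKrullLE_iff] at hlat
      set f : ℕ → Submodule T T := fun n => MJ θ ι x hbasis hcomm n ⊤ with hf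
      have hdesc : ∀ i, f (i + 1) ≤ f i := fun i => MJ_top_succ_le θ ι x hbasis hcomm i ⊤
      have hfin := hlat f hdesc
      obtain ⟨i, hi⟩ := (hfin.infinite_compl).nonempty
      simp only [Set.mem_compl_iff, Set.mem_setOf_eq, not_and_or, not_not] at hi
      have hstrict : f (i + 1) ≠ f i := by
        intro he
        have hxmon : (x ^ i : T) = ι (1 : R) * x ^ i := by rw [map_one, one_mul]
        have hxi : (x ^ i : T) ∈ f i := by
          rw [hxmon]
          exact (mem_MJ_monomial θ ι x hbasis hcomm i ⊤ 1).mpr trivial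
        rw [← he] at hxi
        obtain ⟨h1, -⟩ := hxi
        have h2 := h1 i (by omega)
        rw [hxmon, rep_monomial, Finsupp.single_eq_same] at h2
        exact one_ne_zero h2
      have hex : ∃ β : Ordinal.{0}, ∃ _ : β < γ, latKrullLE β ↥(Set.Icc (f (i + 1)) (f i)) := by
        rcases hi with hi | hi
        · exact absurd hi hstrict
        · exact hi
      obtain ⟨β, hβγ, hβ⟩ := hex
      have hlatRβ : latKrullLE β (Submodule R R) := by
        refine latKrullLE_transfer β (fun J : Submodule R R =>
          (⟨MJ θ ι x hbasis hcomm i J, MJ_top_succ_le θ ι x hbasis hcomm i J,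
            MJ_le θ ι x hbasis hcomm i le_top⟩ : ↥(Set.Icc (f (i + 1)) (f i)))) ?_ ?_ hβ
        · intro J J' hJJ
          exact Subtype.mk_le_mk.mpr (MJ_le θ ι x hbasis hcomm i hJJ)
        · intro J J' hlt he
          exact MJ_strictmono θ ι x hbasis hcomm i hlt (congrArg Subtype.val he)
      have hmod : ModKrullLE R β R := (modKrullLE_iff_lat β R R).mpr hlatRβ
      have hδβ : δ ≤ β := csInf_le (OrderBot.bddBelow _) hmod
      calc δ + 1 ≤ β + 1 := by
            rw [Ordinal.add_one_eq_succ, Ordinal.add_one_eq_succ]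
            exact Order.succ_le_succ hδβ
        _ ≤ γ := by
            rw [Ordinal.add_one_eq_succ]
            exact Order.succ_le_of_lt hβγ
    refine ⟨⟨δ + 1, hT⟩, ?_⟩
    rw [modKrullDim, if_neg (not_subsingleton T), modKrullDim, if_neg hR]
    have hinf : sInf {α : Ordinal.{0} | ModKrullLE T α T} = δ + 1 :=
      le_antisymm (csInf_le (OrderBot.bddBelow _) hT)
        (le_csInf ⟨δ + 1, hT⟩ fun γ hγ => hge γ hγ)
    rw [hinf, ← hδ, WithBot.coe_add, WithBot.coe_one]
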